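/- Let K be a linearly ordered idempotent semifield and A : Matrix (Fin p) (Fin n) K with n ≤ p. Then A is regular if and only if there exists an injective map r : Fin n → Fin p such that the n × n submatrix A.submatrix r id (the rows of A indexed by r) is regular. -/

import Mathlib

/-- A matrix is singular if it admits an orthogonal decomposition `A = A₁ + A₂`
(entrywise disjoint supports) together with a nonzero vector `x` with `A₁ x = A₂ x`. -/
def Matrix.TropSingular {K : Type*} [Semifield K] {m n : Type*} [Fintype n]
    (A : Matrix m n K) : Prop :=
  ∃ A₁ A₂ : Matrix m n K, A = A₁ + A₂ ∧ (∀ i j, A₁ i j = 0 ∨ A₂ i j = 0) ∧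
    ∃ x : n → K, x ≠ 0 ∧ A₁.mulVec x = A₂.mulVec x


open Finset

namespace TropProof

variable {K : Type*} [Semifield K] [LinearOrder K]

section Toolbox
variable (hadd : ∀ a b : K, a + b = max a b)
include hadd

lemma kzero_le (a : K) : (0:K) ≤ a := by
  have h := hadd 0 a
  rw [zero_add] at h
  exact max_eq_right_iff.mp h.symm

lemma kadd_le {a b c : K} (h1 : a ≤ c) (h2 : b ≤ c) : a + b ≤ c := by
  rw [hadd]; exact max_le h1 h2

lemma kle_add_left (a b : K) : a ≤ a + b := by rw [hadd]; exact le_max_left a b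

lemma kle_add_right (a b : K) : b ≤ a + b := by rw [hadd]; exact le_max_right a b

lemma kmul_mono (c : K) {a b : K} (h : a ≤ b) : c * a ≤ c * b := by
  have h1 : a + b = b := by rw [hadd]; exact max_eq_right h
  have h2 : c * a + c * b = c * b := by rw [← mul_add, h1]
  rw [hadd] at h2
  exact max_eq_right_iff.mp h2

lemma kmul_cancel {c a b : K} (hc : c ≠ 0) (h : c * a ≤ c * b) : a ≤ b := by
  have h2 := kmul_mono hadd c⁻¹ h
  rwa [← mul_assoc, ← mul_assoc, inv_mul_cancel₀ hc, one_mul, one_mul] at h2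

lemma kle_zero {a : K} (h : a ≤ 0) : a = 0 := le_antisymm h (kzero_le hadd a)

lemma kle_sum {ι : Type*} {s : Finset ι} {f : ι → K} {j : ι} (hj : j ∈ s) :
    f j ≤ ∑ i ∈ s, f i := by
  induction s using Finset.cons_induction with
  | empty => cases hj
  | cons a s ha ih =>
      rw [Finset.sum_cons]
      rcases Finset.mem_cons.mp hj with h | h
      · subst h; exact kle_add_left hadd _ _
      · exact le_trans (ih h) (kle_add_right hadd _ _)

lemma ksum_le {ι : Type*} {s : Finset ι} {f : ι → K} {c : K} (h : ∀ j ∈ s, f j ≤ c) :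
    ∑ i ∈ s, f i ≤ c := by
  induction s using Finset.cons_induction with
  | empty => simpa using kzero_le hadd c
  | cons a s ha ih =>
      rw [Finset.sum_cons]
      exact kadd_le hadd (h a (Finset.mem_cons_self a s))
        (ih fun j hj => h j (Finset.mem_cons_of_mem hj))

lemma ksum_attained {ι : Type*} (s : Finset ι) (f : ι → K) :
    (∑ i ∈ s, f i = 0) ∨ ∃ j ∈ s, f j = ∑ i ∈ s, f i := by
  induction s using Finset.cons_induction with
  | empty => exact Or.inl Finset.sum_empty
  | cons a s ha ih =>
      rw [Finset.sum_cons, hadd]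
      rcases max_cases (f a) (∑ i ∈ s, f i) with ⟨he, _⟩ | ⟨he, _⟩
      · exact Or.inr ⟨a, Finset.mem_cons_self a s, he.symm⟩
      · rcases ih with h0 | ⟨j, hj, hfj⟩
        · left; rw [he, h0]
        · exact Or.inr ⟨j, Finset.mem_cons_of_mem hj, hfj.trans he.symm⟩

end Toolbox

/-- Row condition: either all entries of `v * x` vanish or the max is attained twice. -/
def RowOK {q : ℕ} (v : Fin q → K) (x : Fin q → K) : Prop :=
  (∀ j, v j * x j = 0) ∨
    ∃ j₁ j₂, j₁ ≠ j₂ ∧ (∀ j, v j * x j ≤ v j₁ * x j₁) ∧ v j₁ * x j₁ = v j₂ * x j₂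

def Solvable {m q : ℕ} (A : Matrix (Fin m) (Fin q) K) : Prop :=
  ∃ x : Fin q → K, x ≠ 0 ∧ ∀ r, RowOK (A r) x



variable {K : Type*} [Semifield K] [LinearOrder K]

lemma singular_iff (hadd : ∀ a b : K, a + b = max a b) {m q : ℕ}
    (A : Matrix (Fin m) (Fin q) K) : A.TropSingular ↔ Solvable A := by
  constructor
  · rintro ⟨A₁, A₂, hA, hdisj, x, hx, hmv⟩
    refine ⟨x, hx, fun i => ?_⟩
    set M := (A₁.mulVec x) i with hM
    have hM1 : ∑ j, A₁ i j * x j = M := rfl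
    have hM2 : ∑ j, A₂ i j * x j = M := by
      rw [hM, hmv]; rfl
    have h1 : ∀ j, A₁ i j * x j ≤ M := fun j =>
      le_of_le_of_eq (kle_sum (f := fun j => A₁ i j * x j) hadd (Finset.mem_univ j)) hM1
    have h2 : ∀ j, A₂ i j * x j ≤ M := fun j =>
      le_of_le_of_eq (kle_sum (f := fun j => A₂ i j * x j) hadd (Finset.mem_univ j)) hM2
    have hterm : ∀ j, A i j * x j = A₁ i j * x j + A₂ i j * x j := by
      intro j; rw [hA, Matrix.add_apply, add_mul]
    have hle : ∀ j, A i j * x j ≤ M := fun j => by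
      rw [hterm j]; exact kadd_le hadd (h1 j) (h2 j)
    by_cases hM0 : M = 0
    · exact Or.inl fun j => kle_zero hadd (hM0 ▸ hle j)
    · rcases ksum_attained hadd Finset.univ (fun j => A₁ i j * x j) with h0 | ⟨j₁, _, hj₁⟩
      · exact absurd (hM1 ▸ h0) hM0
      rcases ksum_attained hadd Finset.univ (fun j => A₂ i j * x j) with h0 | ⟨j₂, _, hj₂⟩
      · exact absurd (hM2 ▸ h0) hM0
      rw [hM1] at hj₁
      rw [hM2] at hj₂
      have hA1ne : A₁ i j₁ ≠ 0 := by
        intro h; rw [h, zero_mul] at hj₁; exact hM0 hj₁.symm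
      have hA2ne : A₂ i j₂ ≠ 0 := by
        intro h; rw [h, zero_mul] at hj₂; exact hM0 hj₂.symm
      have hA2j₁ : A₂ i j₁ = 0 := (hdisj i j₁).resolve_left hA1ne
      have hA1j₂ : A₁ i j₂ = 0 := (hdisj i j₂).resolve_right hA2ne
      have hne : j₁ ≠ j₂ := by
        intro h; rw [h, hA1j₂, zero_mul] at hj₁; exact hM0 hj₁.symm
      have ht1 : A i j₁ * x j₁ = M := by
        rw [hterm, hj₁, hA2j₁, zero_mul, add_zero]
      have ht2 : A i j₂ * x j₂ = M := by
        rw [hterm, hj₂, hA1j₂, zero_mul, zero_add]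
      exact Or.inr ⟨j₁, j₂, hne, fun j => ht1 ▸ hle j, ht1.trans ht2.symm⟩
  · rintro ⟨x, hx, hOK⟩
    classical
    set P : Fin m → Prop := fun i =>
      ∃ j₁ j₂, j₁ ≠ j₂ ∧ (∀ j, A i j * x j ≤ A i j₁ * x j₁) ∧
        A i j₁ * x j₁ = A i j₂ * x j₂ with hP
    have hzero : ∀ i, ¬ P i → ∀ j, A i j * x j = 0 := fun i hi =>
      (hOK i).resolve_right hi
    set A₂ : Matrix (Fin m) (Fin q) K := fun i j =>
      if h : P i then (if j = h.choose_spec.choose then A i j else 0) else 0 with hA₂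
    set A₁ : Matrix (Fin m) (Fin q) K := fun i j =>
      if h : P i then (if j = h.choose_spec.choose then 0 else A i j) else A i j with hA₁
    refine ⟨A₁, A₂, ?_, ?_, x, hx, ?_⟩
    · funext i j
      rw [Matrix.add_apply, hA₁, hA₂]
      by_cases h : P i
      · simp only [dif_pos h]
        by_cases hj : j = h.choose_spec.choose
        · simp [hj]
        · simp [hj]
      · simp [dif_neg h]
    · intro i j
      rw [hA₁, hA₂]
      by_cases h : P i
      · by_cases hj : j = h.choose_spec.choose
        · simp [dif_pos h, hj]
        · simp [dif_pos h, hj]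
      · simp [dif_neg h]
    · funext i
      show ∑ j, A₁ i j * x j = ∑ j, A₂ i j * x j
      by_cases h : P i
      · obtain ⟨hne, hdom, heq⟩ := h.choose_spec.choose_spec
        set j₁ := h.choose
        set j₂ := h.choose_spec.choose
        have e₂ : ∑ j, A₂ i j * x j = A i j₂ * x j₂ := by
          rw [hA₂]
          simp only [dif_pos h]
          have : ∀ j : Fin q, (if j = j₂ then A i j else 0) * x j
              = if j = j₂ then A i j * x j else 0 := by
            intro j; by_cases hj : j = j₂ <;> simp [hj]
          rw [Finset.sum_congr rfl fun j _ => this j]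
          rw [Finset.sum_ite_eq' Finset.univ j₂ (fun j => A i j * x j)]
          simp
        have e₁ : ∑ j, A₁ i j * x j = A i j₁ * x j₁ := by
          refine le_antisymm ?_ ?_
          · refine ksum_le hadd fun j _ => ?_
            rw [hA₁]
            simp only [dif_pos h]
            by_cases hj : j = j₂
            · rw [if_pos hj, zero_mul]
              exact kzero_le hadd _
            · rw [if_neg hj]
              exact hdom j
          · have := kle_sum (f := fun j => A₁ i j * x j) hadd (Finset.mem_univ j₁)
            refine le_trans (le_of_eq ?_) this
            rw [hA₁]
            simp only [dif_pos h]
            rw [if_neg hne]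
        rw [e₁, e₂, heq]
      · have e₁ : ∑ j, A₁ i j * x j = 0 := by
          refine Finset.sum_eq_zero fun j _ => ?_
          rw [hA₁]; simp only [dif_neg h]; exact hzero i h j
        have e₂ : ∑ j, A₂ i j * x j = 0 := by
          refine Finset.sum_eq_zero fun j _ => ?_
          rw [hA₂]; simp only [dif_neg h, zero_mul]
        rw [e₁, e₂]

noncomputable def InjAvoid (m : ℕ) (j : Fin (m+1)) : Finset (Fin m → Fin (m+1)) := by
  classical
  exact Finset.univ.filter (fun f => Function.Injective f ∧ ∀ i, f i ≠ j)

noncomputable def CX {m : ℕ} (N : Matrix (Fin m) (Fin (m+1)) K) (j : Fin (m+1)) : K :=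
  ∑ f ∈ InjAvoid m j, ∏ i, N i (f i)

lemma mem_InjAvoid {m : ℕ} {j : Fin (m+1)} {f : Fin m → Fin (m+1)} :
    f ∈ InjAvoid m j ↔ Function.Injective f ∧ ∀ i, f i ≠ j := by
  classical
  simp [InjAvoid]

section Dev2
variable (hadd : ∀ a b : K, a + b = max a b)
include hadd

lemma cramer_rowOK {m : ℕ} (N : Matrix (Fin m) (Fin (m+1)) K) (r : Fin m) :
    RowOK (N r) (CX N) := by
  classical
  set t : Fin (m+1) → K := fun j => N r j * CX N j with ht
  have htsum : ∀ j, t j = ∑ f ∈ InjAvoid m j, N r j * ∏ i, N i (f i) := by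
    intro j; rw [ht]; exact Finset.mul_sum _ _ _
  set μ : K := ∑ j, t j with hμdef
  have hle : ∀ j, t j ≤ μ := fun j => kle_sum hadd (Finset.mem_univ j)
  by_cases hμ0 : μ = 0
  · exact Or.inl fun j => kle_zero hadd (hμ0 ▸ hle j)
  · rcases ksum_attained hadd Finset.univ t with h0 | ⟨j₁, _, hj₁⟩
    · exact absurd h0 hμ0
    have hj₁' : t j₁ = μ := hj₁
    have hj₁0 : t j₁ ≠ 0 := fun h => hμ0 (hj₁'.symm.trans h)
    rcases ksum_attained hadd (InjAvoid m j₁) (fun f => N r j₁ * ∏ i, N i (f i)) with h0 | hf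
    · rw [htsum j₁] at hj₁0; exact absurd h0 hj₁0
    obtain ⟨f, hfmem, hfw⟩ := hf
    rw [← htsum j₁] at hfw
    obtain ⟨hfinj, hfav⟩ := mem_InjAvoid.mp hfmem
    have hμval : N r j₁ * ∏ i, N i (f i) = μ := hfw.trans hj₁
    set g : Fin m → Fin (m+1) := Function.update f r j₁ with hg
    have hgval : ∀ i, g i = if i = r then j₁ else f i := by
      intro i; rw [hg]; exact Function.update_apply f r j₁ i
    have hginj : Function.Injective g := by
      intro a b hab
      rw [hgval, hgval] at hab
      by_cases ha : a = r <;> by_cases hb : b = r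
      · rw [ha, hb]
      · rw [if_pos ha, if_neg hb] at hab; exact absurd hab.symm (hfav b)
      · rw [if_neg ha, if_pos hb] at hab; exact absurd hab (hfav a)
      · rw [if_neg ha, if_neg hb] at hab; exact hfinj hab
    have hgav : ∀ i, g i ≠ f r := by
      intro i
      rw [hgval]
      by_cases hi : i = r
      · rw [if_pos hi]; exact (hfav r).symm
      · rw [if_neg hi]; exact fun h => hi (hfinj h)
    have hgmem : g ∈ InjAvoid m (f r) := mem_InjAvoid.mpr ⟨hginj, hgav⟩
    have hprodg : ∏ i, N i (g i) = N r j₁ * ∏ i ∈ Finset.univ \ {r}, N i (f i) := by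
      have hstep : ∀ i, N i (g i) = Function.update (fun k => N k (f k)) r (N r j₁) i := by
        intro i
        rw [hgval i, Function.update_apply]
        by_cases hi : i = r
        · rw [if_pos hi, if_pos hi, hi]
        · rw [if_neg hi, if_neg hi]
      rw [Finset.prod_congr rfl (fun i _ => hstep i),
        Finset.prod_update_of_mem (Finset.mem_univ r)]
    have hprodf : ∏ i, N i (f i) = N r (f r) * ∏ i ∈ Finset.univ \ {r}, N i (f i) :=
      Finset.prod_eq_mul_prod_sdiff_singleton_of_mem (Finset.mem_univ r) _
    have hw2 : N r (f r) * ∏ i, N i (g i) = μ := by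
      rw [hprodg, ← hμval, hprodf]; ring
    have h1 : μ ≤ t (f r) := by
      rw [htsum (f r), ← hw2]
      exact kle_sum (f := fun f' => N r (f r) * ∏ i, N i (f' i)) hadd hgmem
    have ht2 : t (f r) = μ := le_antisymm (hle (f r)) h1
    exact Or.inr ⟨j₁, f r, (hfav r).symm,
      fun j => le_trans (hle j) (le_of_eq hj₁'.symm), hj₁'.trans ht2.symm⟩

lemma CX_ne_zero {m : ℕ} (N : Matrix (Fin m) (Fin (m+1)) K) (j : Fin (m+1))
    (f₀ : Fin m → Fin (m+1)) (hinj : Function.Injective f₀) (hav : ∀ i, f₀ i ≠ j)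
    (hnz : ∀ i, N i (f₀ i) ≠ 0) : CX N j ≠ 0 := by
  have hmem : f₀ ∈ InjAvoid m j := mem_InjAvoid.mpr ⟨hinj, hav⟩
  have hterm : ∏ i, N i (f₀ i) ≤ CX N j :=
    kle_sum (f := fun f => ∏ i, N i (f i)) hadd hmem
  have hpne : ∏ i, N i (f₀ i) ≠ 0 := Finset.prod_ne_zero_iff.mpr fun i _ => hnz i
  intro h
  rw [h] at hterm
  exact hpne (kle_zero hadd hterm)

end Dev2


lemma underdetermined (hadd : ∀ a b : K, a + b = max a b) :
    ∀ m q : ℕ, ∀ P : Matrix (Fin m) (Fin q) K, m < q →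
    ∃ lam : Fin q → K, lam ≠ 0 ∧ ∀ r, RowOK (P r) lam := by
  intro m
  induction m using Nat.strong_induction_on with
  | _ m IH =>
  intro q P hmq
  classical
  by_cases hA : ∃ f : Fin m → Fin q, Function.Injective f ∧ ∀ i, P i (f i) ≠ 0
  · obtain ⟨f₀, hinj, hnz⟩ := hA
    have hcard : (Finset.univ.image f₀).card = m := by
      rw [Finset.card_image_of_injective _ hinj, Finset.card_univ, Fintype.card_fin]
    have hcompl : ((Finset.univ.image f₀)ᶜ : Finset (Fin q)).Nonempty := by
      rw [← Finset.card_pos, Finset.card_compl, hcard, Fintype.card_fin]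
      omega
    obtain ⟨cstar, hcstar⟩ := hcompl
    have hcstar' : ∀ i, f₀ i ≠ cstar := by
      intro i h
      exact (Finset.mem_compl.mp hcstar) (Finset.mem_image.mpr ⟨i, Finset.mem_univ i, h⟩)
    set e : Fin (m+1) → Fin q := Fin.snoc f₀ cstar with he
    have heCast : ∀ i : Fin m, e (Fin.castSucc i) = f₀ i := by
      intro i; rw [he]; exact Fin.snoc_castSucc _ _ _
    have heLast : e (Fin.last m) = cstar := by
      rw [he]; exact Fin.snoc_last _ _
    have heinj : Function.Injective e := by
      intro a b hab
      induction a using Fin.lastCases with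
      | last =>
          induction b using Fin.lastCases with
          | last => rfl
          | cast b => rw [heLast, heCast] at hab; exact absurd hab.symm (hcstar' b)
      | cast a =>
          induction b using Fin.lastCases with
          | last => rw [heLast, heCast] at hab; exact absurd hab (hcstar' a)
          | cast b => rw [heCast, heCast] at hab; exact congrArg Fin.castSucc (hinj hab)
    set N : Matrix (Fin m) (Fin (m+1)) K := fun i j => P i (e j) with hN
    set lam : Fin q → K := fun c => ∑ j : Fin (m+1), if e j = c then CX N j else 0 with hlam
    have hlam_e : ∀ j, lam (e j) = CX N j := by
      intro j
      show (∑ j' : Fin (m+1), if e j' = e j then CX N j' else 0) = CX N j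
      rw [Finset.sum_eq_single j]
      · rw [if_pos rfl]
      · intro j' _ hne
        exact if_neg (fun h => hne (heinj h))
      · intro h; exact absurd (Finset.mem_univ j) h
    have hlam_out : ∀ c, (∀ j, e j ≠ c) → lam c = 0 := by
      intro c hc
      show (∑ j : Fin (m+1), if e j = c then CX N j else 0) = 0
      exact Finset.sum_eq_zero fun j _ => if_neg (hc j)
    have hCXlast : CX N (Fin.last m) ≠ 0 := by
      refine CX_ne_zero hadd N (Fin.last m) Fin.castSucc (Fin.castSucc_injective m)
        (fun i => (Fin.castSucc_lt_last i).ne) ?_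
      intro i
      show P i (e (Fin.castSucc i)) ≠ 0
      rw [heCast]; exact hnz i
    have hlamne : lam ≠ 0 := by
      intro h
      have h2 := hlam_e (Fin.last m)
      rw [h] at h2
      exact hCXlast (by simpa using h2.symm)
    refine ⟨lam, hlamne, fun r => ?_⟩
    rcases cramer_rowOK hadd N r with h0 | ⟨j₁, j₂, hne, hdom, heq⟩
    · left
      intro c
      by_cases hc : ∃ j, e j = c
      · obtain ⟨j, rfl⟩ := hc
        rw [hlam_e]
        exact h0 j
      · push_neg at hc
        rw [hlam_out c hc, mul_zero]
    · right
      refine ⟨e j₁, e j₂, fun h => hne (heinj h), ?_, ?_⟩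
      · intro c
        by_cases hc : ∃ j, e j = c
        · obtain ⟨j, rfl⟩ := hc
          rw [hlam_e, hlam_e]
          exact hdom j
        · push_neg at hc
          rw [hlam_out c hc, mul_zero, hlam_e]
          exact kzero_le hadd _
      · rw [hlam_e, hlam_e]; exact heq
  · push_neg at hA
    set t : Fin m → Finset (Fin q) := fun r => Finset.univ.filter (fun c => P r c ≠ 0) with htdef
    have hHall : ¬ ∀ s : Finset (Fin m), s.card ≤ (s.biUnion t).card := by
      intro h
      obtain ⟨f, hfinj, hft⟩ := (Finset.all_card_le_biUnion_card_iff_exists_injective t).mp h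
      obtain ⟨i, hi⟩ := hA f hfinj
      have h2 := hft i
      rw [htdef] at h2
      exact (Finset.mem_filter.mp h2).2 hi
    push_neg at hHall
    obtain ⟨s, hs⟩ := hHall
    set C₁ : Finset (Fin q) := s.biUnion t with hC₁
    have hscard : s.card ≤ m := by
      have h2 := Finset.card_le_univ s
      rwa [Fintype.card_fin] at h2
    have hCcard : C₁.card ≤ q := by
      have h2 := Finset.card_le_univ C₁
      rwa [Fintype.card_fin] at h2
    have hm₁eq : (sᶜ : Finset (Fin m)).card = m - s.card := by
      rw [Finset.card_compl, Fintype.card_fin]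
    have hq₁eq : (C₁ᶜ : Finset (Fin q)).card = q - C₁.card := by
      rw [Finset.card_compl, Fintype.card_fin]
    set m₁ := (sᶜ : Finset (Fin m)).card with hm₁
    set q₁ := (C₁ᶜ : Finset (Fin q)).card with hq₁
    have hm₁lt : m₁ < m := by omega
    have hlt : m₁ < q₁ := by omega
    set ρ := (sᶜ : Finset (Fin m)).orderIsoOfFin rfl with hρdef
    set γ := (C₁ᶜ : Finset (Fin q)).orderIsoOfFin rfl with hγdef
    set P' : Matrix (Fin m₁) (Fin q₁) K := fun i j => P (ρ i) (γ j) with hP'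
    obtain ⟨lam', hlam'ne, hlam'OK⟩ := IH m₁ hm₁lt q₁ P' hlt
    set lam : Fin q → K :=
      fun c => if h : c ∈ (C₁ᶜ : Finset (Fin q)) then lam' (γ.symm ⟨c, h⟩) else 0 with hlamdef
    have hlam_γ : ∀ j, lam ((γ j : Fin q)) = lam' j := by
      intro j
      have hmem : (γ j : Fin q) ∈ (C₁ᶜ : Finset (Fin q)) := (γ j).2
      rw [hlamdef]
      simp only [dif_pos hmem]
      congr 1
      have h3 : (⟨(γ j : Fin q), hmem⟩ : {x // x ∈ (C₁ᶜ : Finset (Fin q))}) = γ j :=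
        Subtype.ext rfl
      rw [h3, OrderIso.symm_apply_apply]
    have hlam_out : ∀ c, c ∉ (C₁ᶜ : Finset (Fin q)) → lam c = 0 := by
      intro c hc
      rw [hlamdef]
      simp only [dif_neg hc]
    have hlamne : lam ≠ 0 := by
      obtain ⟨j', hj'⟩ := Function.ne_iff.mp hlam'ne
      refine Function.ne_iff.mpr ⟨(γ j' : Fin q), ?_⟩
      rw [hlam_γ]
      exact hj'
    refine ⟨lam, hlamne, fun r => ?_⟩
    by_cases hr : r ∈ s
    · left
      intro c
      by_cases hc : c ∈ (C₁ᶜ : Finset (Fin q))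
      · have hcnot : c ∉ C₁ := Finset.mem_compl.mp hc
        have hPz : P r c = 0 := by
          by_contra hne
          exact hcnot (Finset.mem_biUnion.mpr
            ⟨r, hr, Finset.mem_filter.mpr ⟨Finset.mem_univ c, hne⟩⟩)
        rw [hPz, zero_mul]
      · rw [hlam_out c hc, mul_zero]
    · have hrc : r ∈ (sᶜ : Finset (Fin m)) := Finset.mem_compl.mpr hr
      have hρr : (ρ (ρ.symm ⟨r, hrc⟩) : Fin m) = r := by
        rw [OrderIso.apply_symm_apply]
      set i' := ρ.symm ⟨r, hrc⟩ with hi'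
      have hrow : ∀ j : Fin q₁, P' i' j = P r (γ j) := by
        intro j
        show P (ρ i') (γ j) = P r (γ j)
        rw [hρr]
      rcases hlam'OK i' with h0 | ⟨j₁, j₂, hne, hdom, heq⟩
      · left
        intro c
        by_cases hc : c ∈ (C₁ᶜ : Finset (Fin q))
        · have hγc : (γ (γ.symm ⟨c, hc⟩) : Fin q) = c := by
            rw [OrderIso.apply_symm_apply]
          have hlc : lam c = lam' (γ.symm ⟨c, hc⟩) := by
            have h3 := hlam_γ (γ.symm ⟨c, hc⟩)
            rwa [hγc] at h3
          have h2 := h0 (γ.symm ⟨c, hc⟩)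
          rw [hrow (γ.symm ⟨c, hc⟩), hγc] at h2
          rw [hlc]
          exact h2
        · rw [hlam_out c hc, mul_zero]
      · right
        refine ⟨(γ j₁ : Fin q), (γ j₂ : Fin q),
          fun h => hne (γ.injective (Subtype.ext h)), ?_, ?_⟩
        · intro c
          by_cases hc : c ∈ (C₁ᶜ : Finset (Fin q))
          · have hγc : (γ (γ.symm ⟨c, hc⟩) : Fin q) = c := by
              rw [OrderIso.apply_symm_apply]
            have hlc : lam c = lam' (γ.symm ⟨c, hc⟩) := by
              have h3 := hlam_γ (γ.symm ⟨c, hc⟩)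
              rwa [hγc] at h3
            have h2 := hdom (γ.symm ⟨c, hc⟩)
            rw [hrow (γ.symm ⟨c, hc⟩), hrow j₁, hγc] at h2
            rw [hlc, hlam_γ j₁]
            exact h2
          · rw [hlam_out c hc, mul_zero, hlam_γ]
            exact kzero_le hadd _
        · rw [hlam_γ, hlam_γ]
          have h2 := heq
          rw [hrow j₁, hrow j₂] at h2
          exact h2


lemma solve_all (hadd : ∀ a b : K, a + b = max a b) {n : ℕ} :
    ∀ p : ℕ, (hnp : n ≤ p) → ∀ A : Matrix (Fin p) (Fin n) K,
    (∀ r : Fin n → Fin p, Function.Injective r → Solvable (A.submatrix r id)) →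
    Solvable A := by
  intro p hnp
  induction p, hnp using Nat.le_induction with
  | base =>
      intro A hyp
      have h := hyp id Function.injective_id
      rwa [Matrix.submatrix_id_id] at h
  | succ p hp IH =>
      intro A hyp
      classical
      have hpoint : ∀ i : Fin (p+1), ∃ x : Fin n → K, x ≠ 0 ∧
          ∀ r : Fin (p+1), r ≠ i → RowOK (A r) x := by
        intro i
        set A' : Matrix (Fin p) (Fin n) K := A.submatrix i.succAbove id with hA'
        have hsub : ∀ r : Fin n → Fin p, Function.Injective r →
            Solvable (A'.submatrix r id) := by
          intro r hr
          have h2 := hyp (i.succAbove ∘ r) (Fin.succAbove_right_injective.comp hr)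
          have h3 : A'.submatrix r id = A.submatrix (i.succAbove ∘ r) id := by
            rw [hA', Matrix.submatrix_submatrix]
            rfl
          rwa [h3]
        obtain ⟨x, hx, hOK⟩ := IH A' hsub
        refine ⟨x, hx, fun r hr => ?_⟩
        obtain ⟨r', rfl⟩ := Fin.exists_succAbove_eq hr
        exact hOK r'
      choose xs hxs0 hxsOK using hpoint
      have hnp1 : n + 1 ≤ p + 1 := by omega
      set T : Fin (n+1) → Fin (p+1) := fun i => Fin.castLE hnp1 i with hT
      have hTinj : Function.Injective T := fun a b h => Fin.castLE_injective hnp1 h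
      set Pm : Matrix (Fin n) (Fin (n+1)) K := fun c i => xs (T i) c with hPm
      obtain ⟨lam, hlamne, hlamOK⟩ :=
        underdetermined hadd n (n+1) Pm (Nat.lt_succ_self n)
      set z : Fin n → K := fun c => ∑ i, Pm c i * lam i with hz
      have hzsum : ∀ c, z c = ∑ i, Pm c i * lam i := fun c => rfl
      have hzge : ∀ c i, Pm c i * lam i ≤ z c := by
        intro c i
        rw [hzsum]
        exact kle_sum (f := fun i => Pm c i * lam i) hadd (Finset.mem_univ i)
      have hzne : z ≠ 0 := by
        obtain ⟨i₀, hi₀⟩ := Function.ne_iff.mp hlamne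
        obtain ⟨c₀, hc₀⟩ := Function.ne_iff.mp (hxs0 (T i₀))
        have hPne : Pm c₀ i₀ * lam i₀ ≠ 0 := mul_ne_zero hc₀ hi₀
        refine Function.ne_iff.mpr ⟨c₀, fun h => ?_⟩
        have h2 := hzge c₀ i₀
        rw [h] at h2
        exact hPne (kle_zero hadd h2)
      refine ⟨z, hzne, fun mrow => ?_⟩
      set v : Fin (n+1) → K := fun i => ∑ c, A mrow c * xs (T i) c with hv
      set μ : K := ∑ c, A mrow c * z c with hμ
      have hμle : ∀ c, A mrow c * z c ≤ μ := fun c =>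
        kle_sum (f := fun c => A mrow c * z c) hadd (Finset.mem_univ c)
      have hswap : μ = ∑ i, lam i * v i := by
        rw [hμ]
        have h1 : ∀ c, A mrow c * z c = ∑ i, lam i * (A mrow c * Pm c i) := by
          intro c
          rw [hzsum, Finset.mul_sum]
          exact Finset.sum_congr rfl fun i _ => by ring
        rw [Finset.sum_congr rfl fun c _ => h1 c, Finset.sum_comm]
        refine Finset.sum_congr rfl fun i _ => ?_
        rw [hv, Finset.mul_sum]
      have hvle : ∀ i, lam i * v i ≤ μ := by
        intro i
        rw [hswap]
        exact kle_sum (f := fun i => lam i * v i) hadd (Finset.mem_univ i)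
      by_cases hμ0 : μ = 0
      · exact Or.inl fun c => kle_zero hadd (hμ0 ▸ hμle c)
      · by_cases hcase : ∃ i, T i ≠ mrow ∧ lam i * v i = μ
        · obtain ⟨i₀, hTne, hattain⟩ := hcase
          rcases hxsOK (T i₀) mrow (fun h => hTne h.symm) with h0 | ⟨c₁, c₂, hne, hdom, heq⟩
          · exfalso
            have hv0 : v i₀ = 0 := by
              rw [hv]; exact Finset.sum_eq_zero fun c _ => h0 c
            rw [hv0, mul_zero] at hattain
            exact hμ0 hattain.symm
          · have hvval : v i₀ = A mrow c₁ * xs (T i₀) c₁ := by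
              refine le_antisymm (ksum_le hadd fun c _ => hdom c) ?_
              exact kle_sum (f := fun c => A mrow c * xs (T i₀) c) hadd (Finset.mem_univ c₁)
            have hc₁ : A mrow c₁ * z c₁ = μ := by
              refine le_antisymm (hμle c₁) ?_
              calc μ = lam i₀ * v i₀ := hattain.symm
                _ = A mrow c₁ * (Pm c₁ i₀ * lam i₀) := by rw [hvval]; ring
                _ ≤ A mrow c₁ * z c₁ := kmul_mono hadd _ (hzge c₁ i₀)
            have hc₂ : A mrow c₂ * z c₂ = μ := by
              refine le_antisymm (hμle c₂) ?_
              calc μ = lam i₀ * v i₀ := hattain.symm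
                _ = A mrow c₂ * (Pm c₂ i₀ * lam i₀) := by rw [hvval, heq]; ring
                _ ≤ A mrow c₂ * z c₂ := kmul_mono hadd _ (hzge c₂ i₀)
            exact Or.inr ⟨c₁, c₂, hne, fun c => hc₁ ▸ hμle c, hc₁.trans hc₂.symm⟩
        · exfalso
          push_neg at hcase
          rcases ksum_attained hadd Finset.univ (fun i => lam i * v i) with h0 | ⟨i₀, _, hi₀⟩
          · rw [← hswap] at h0; exact hμ0 h0
          rw [← hswap] at hi₀
          have hTi₀ : T i₀ = mrow := by
            by_contra hne
            exact hcase i₀ hne hi₀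
          have hlam₀ : lam i₀ ≠ 0 := by
            intro h; rw [h, zero_mul] at hi₀; exact hμ0 hi₀.symm
          have hv₀ : v i₀ ≠ 0 := by
            intro h; rw [h, mul_zero] at hi₀; exact hμ0 hi₀.symm
          rcases ksum_attained hadd Finset.univ (fun c => A mrow c * xs (T i₀) c)
            with h0 | ⟨chat, _, hchat⟩
          · exact hv₀ h0
          have hchat' : A mrow chat * xs (T i₀) chat = v i₀ := hchat
          have hprodne : A mrow chat * xs (T i₀) chat ≠ 0 := by
            rw [hchat']; exact hv₀
          have hAchat : A mrow chat ≠ 0 := fun h => hprodne (by rw [h, zero_mul])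
          have hw : Pm chat i₀ * lam i₀ = z chat := by
            refine le_antisymm (hzge chat i₀) ?_
            refine kmul_cancel hadd hAchat ?_
            calc A mrow chat * z chat ≤ μ := hμle chat
              _ = lam i₀ * v i₀ := hi₀.symm
              _ = A mrow chat * (Pm chat i₀ * lam i₀) := by rw [← hchat']; ring
          have hwne : z chat ≠ 0 := by
            rw [← hw]
            have hxne : xs (T i₀) chat ≠ 0 := fun h => hprodne (by rw [h, mul_zero])
            exact mul_ne_zero hxne hlam₀
          have hμchat : A mrow chat * z chat = μ := by
            refine le_antisymm (hμle chat) ?_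
            calc μ = lam i₀ * v i₀ := hi₀.symm
              _ = A mrow chat * (Pm chat i₀ * lam i₀) := by rw [← hchat']; ring
              _ ≤ A mrow chat * z chat := kmul_mono hadd _ (hzge chat i₀)
          rcases hlamOK chat with h0 | ⟨i₁, i₂, hne12, hdom', heq'⟩
          · have := h0 i₀
            rw [hw] at this
            exact hwne this
          · have hWz : Pm chat i₁ * lam i₁ = z chat := by
              refine le_antisymm (hzge chat i₁) ?_
              rw [hzsum]
              exact ksum_le hadd fun i _ => hdom' i
            obtain ⟨i', hi'ne, hi'val⟩ : ∃ i', i' ≠ i₀ ∧ Pm chat i' * lam i' = z chat := by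
              by_cases h1 : i₁ = i₀
              · exact ⟨i₂, fun h => hne12 (h1.trans h.symm), heq' ▸ hWz⟩
              · exact ⟨i₁, h1, hWz⟩
            have hTi' : T i' ≠ mrow := fun h => hi'ne (hTinj (h.trans hTi₀.symm))
            have hi'attain : lam i' * v i' = μ := by
              refine le_antisymm (hvle i') ?_
              calc μ = A mrow chat * z chat := hμchat.symm
                _ = A mrow chat * (Pm chat i' * lam i') := by rw [hi'val]
                _ = lam i' * (A mrow chat * xs (T i') chat) := by rw [hPm]; ring
                _ ≤ lam i' * v i' := by
                    refine kmul_mono hadd _ ?_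
                    rw [hv]
                    exact kle_sum (f := fun c => A mrow c * xs (T i') c) hadd
                      (Finset.mem_univ chat)
            exact hcase i' hTi' hi'attain


end TropProof

theorem regular_iff_exists_regular_square_submatrix {K : Type*} [Semifield K]
    [LinearOrder K] (hadd : ∀ a b : K, a + b = max a b) {n p : ℕ} (hnp : n ≤ p)
    (A : Matrix (Fin p) (Fin n) K) :
    ¬ A.TropSingular ↔
      ∃ r : Fin n → Fin p, Function.Injective r ∧ ¬ (A.submatrix r id).TropSingular := by
  constructor
  · intro hreg
    by_contra hcon
    push_neg at hcon
    apply hreg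
    rw [TropProof.singular_iff hadd]
    exact TropProof.solve_all hadd p hnp A
      (fun r hr => (TropProof.singular_iff hadd _).mp (hcon r hr))
  · rintro ⟨r, hr, hns⟩ hsing
    apply hns
    obtain ⟨A₁, A₂, hA, hdisj, x, hx, hmv⟩ := hsing
    refine ⟨A₁.submatrix r id, A₂.submatrix r id, ?_, fun i j => hdisj (r i) j, x, hx, ?_⟩
    · rw [hA]; rfl
    · funext i
      exact congrFun hmv (r i)
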